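/- An R-module M is S-Mittag-Leffler with respect to the class of all flat modules if and only if it is S-Mittag-Leffler with respect to the class of all projective modules, if and only if it is S-Mittag-Leffler with respect to the singleton class {R} (i.e., for every index set I, the canonical map M ⊗_R R^I → M^I has S-torsion kernel). -/

import Mathlib

/-- The canonical map `M ⊗[R] (∀ i, N i) →ₗ[R] ∀ i, M ⊗[R] N i`. -/
noncomputable def tensorPiMap (R : Type*) [CommRing R] (M : Type*) [AddCommGroup M]
    [Module R M] {ι : Type*} (N : ι → Type*) [∀ i, AddCommGroup (N i)]
    [∀ i, Module R (N i)] :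
    (TensorProduct R M (∀ i, N i)) →ₗ[R] (∀ i, TensorProduct R M (N i)) :=
  LinearMap.pi fun i => LinearMap.lTensor M (LinearMap.proj i)

/-- `M` is `S`-Mittag-Leffler with respect to a class `Q` of `R`-modules if for every
family of modules in `Q`, the canonical map `M ⊗ ∏ Qᵢ → ∏ (M ⊗ Qᵢ)` has `S`-torsion kernel. -/
def IsSMittagLeffler (R : Type) [CommRing R] (S : Submonoid R) (M : Type) [AddCommGroup M]
    [Module R M] (Q : ModuleCat R → Prop) : Prop :=
  ∀ (ι : Type) (N : ι → ModuleCat R), (∀ i, Q (N i)) →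
    ∀ x ∈ LinearMap.ker (tensorPiMap R M fun i => (N i : Type)), ∃ s ∈ S, s • x = 0


section Aux

open TensorProduct LinearMap Finset
/-- Relation lemma: a vanishing sum of simple tensors with second factors in a flat module
factors through a finite free module. -/
lemma flat_relation_aux {R : Type} [CommRing R] {M Q : Type} [AddCommGroup M] [Module R M]
    [AddCommGroup Q] [Module R Q] [Module.Flat R Q] {n : ℕ} (m : Fin n → M) (q : Fin n → Q)
    (h : ∑ j, m j ⊗ₜ[R] q j = (0 : M ⊗[R] Q)) :
    ∃ (p : ℕ) (a : Fin n → Fin p → R) (z : Fin p → Q),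
      (∀ j, q j = ∑ k, a j k • z k) ∧ ∀ k, ∑ j, a j k • m j = 0 := by
  classical
  let π : (Fin n → R) →ₗ[R] M :=
    ∑ j, (LinearMap.toSpanSingleton R M (m j)).comp (LinearMap.proj j)
  have hπ : ∀ v : Fin n → R, π v = ∑ j, v j • m j := by
    intro v; simp [π, LinearMap.sum_apply]
  have hexact : Function.Exact ((ker π).subtype) π := π.exact_subtype_ker_map
  have texact := Module.Flat.rTensor_exact Q hexact
  set xt : (Fin n → R) ⊗[R] Q := ∑ j, (Pi.single j (1 : R)) ⊗ₜ[R] q j with hxt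
  have hmem : rTensor Q π xt = 0 := by
    rw [hxt, map_sum]
    have : ∀ j, rTensor Q π ((Pi.single j (1 : R)) ⊗ₜ[R] q j) = m j ⊗ₜ[R] q j := by
      intro j
      rw [rTensor_tmul]
      congr 1
      rw [hπ]
      simp [Pi.single_apply, ite_smul]
    simp_rw [this]
    exact h
  obtain ⟨t, ht⟩ := (texact xt).mp hmem
  obtain ⟨T, rfl⟩ := TensorProduct.exists_finset t
  set p := T.card with hp
  let g : Fin p ≃ T := T.equivFin.symm
  refine ⟨p, fun j k => (((g k : ker π × Q).1 : ker π) : Fin n → R) j,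
    fun k => (g k : ker π × Q).2, ?_, ?_⟩
  · intro j
    have happ := congrArg ((TensorProduct.lid R Q).toLinearMap ∘ₗ rTensor Q (LinearMap.proj j)) ht
    simp only [map_sum, coe_comp, Function.comp_apply, LinearEquiv.coe_coe] at happ
    have hlhs : ∀ c : ker π × Q,
        (TensorProduct.lid R Q) (rTensor Q (LinearMap.proj j) (rTensor Q (ker π).subtype
          (c.1 ⊗ₜ[R] c.2))) = ((c.1 : Fin n → R) j) • c.2 := by
      intro c; simp [rTensor_tmul]
    have hrhs : ∀ j' : Fin n,
        (TensorProduct.lid R Q) (rTensor Q (LinearMap.proj j) ((Pi.single j' (1 : R) : Fin n → R) ⊗ₜ[R] q j'))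
          = ((Pi.single j' (1 : R) : Fin n → R) j) • q j' := by
      intro j'; simp [rTensor_tmul]
    rw [hxt] at happ
    simp only [map_sum] at happ
    simp_rw [hlhs, hrhs] at happ
    have hq : ∑ j', ((Pi.single j' (1 : R) : Fin n → R) j) • q j' = q j := by
      simp [Pi.single_apply, ite_smul]
    rw [hq] at happ
    rw [← happ, ← Finset.sum_coe_sort T]
    exact (Equiv.sum_comp g fun c : T =>
      ((c : ker π × Q).1 : Fin n → R) j • (c : ker π × Q).2).symm
  · intro k
    have hk : π ((g k : ker π × Q).1 : Fin n → R) = 0 := ((g k : ker π × Q).1).2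
    rw [hπ] at hk
    exact hk


variable {R : Type} [CommRing R] (S : Submonoid R) {M : Type} [AddCommGroup M] [Module R M]

lemma isSMittagLeffler_mono {Q Q' : ModuleCat R → Prop} (h : ∀ N, Q' N → Q N) :
    IsSMittagLeffler R S M Q → IsSMittagLeffler R S M Q' :=
  fun H ι N hN => H ι N fun i => h _ (hN i)

lemma isSMittagLeffler_flat_of_R
    (hR : IsSMittagLeffler R S M (fun N => Nonempty ((N : Type) ≃ₗ[R] R))) :
    IsSMittagLeffler R S M (fun N => Module.Flat R (N : Type)) := by
  classical
  intro ι N hN x hx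
  haveI : ∀ i, Module.Flat R (N i) := hN
  obtain ⟨T, rfl⟩ := TensorProduct.exists_finset x
  set n := T.card with hn
  let g : Fin n ≃ T := T.equivFin.symm
  let m : Fin n → M := fun j => (g j : M × (∀ i, N i)).1
  let q : Fin n → (∀ i, N i) := fun j => (g j : M × (∀ i, N i)).2
  have hxq : ∑ c ∈ T, c.1 ⊗ₜ[R] c.2 = ∑ j, m j ⊗ₜ[R] q j := by
    rw [← Finset.sum_coe_sort T]
    exact (Equiv.sum_comp g fun c : T =>
      (c : M × (∀ i, N i)).1 ⊗ₜ[R] (c : M × (∀ i, N i)).2).symm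
  rw [hxq] at hx ⊢
  -- componentwise vanishing
  have hcomp : ∀ i, ∑ j, m j ⊗ₜ[R] q j i = (0 : M ⊗[R] N i) := by
    intro i
    have := congrFun (LinearMap.mem_ker.mp hx) i
    simpa [tensorPiMap, map_sum] using this
  choose p a z h1 h2 using fun i => flat_relation_aux m (fun j => q j i) (hcomp i)
  -- the free family
  let J := Σ i : ι, Fin (p i)
  let N' : J → ModuleCat R := fun _ => ModuleCat.of R R
  let c : Fin n → (∀ jk : J, (N' jk : Type)) := fun j jk => a jk.1 j jk.2
  set w : M ⊗[R] (∀ jk : J, (N' jk : Type)) := ∑ j, m j ⊗ₜ[R] c j with hw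
  have hwker : w ∈ LinearMap.ker (tensorPiMap R M fun jk => (N' jk : Type)) := by
    rw [LinearMap.mem_ker]
    funext jk
    obtain ⟨i, k⟩ := jk
    have : (tensorPiMap R M fun jk => (N' jk : Type)) w ⟨i, k⟩
        = ∑ j, m j ⊗ₜ[R] (a i j k : R) := by
      simp [tensorPiMap, hw, map_sum]
      rfl
    rw [Pi.zero_apply, this]
    apply (TensorProduct.rid R M).injective
    rw [map_sum, map_zero]
    have : ∀ j, (TensorProduct.rid R M) (m j ⊗ₜ[R] (a i j k : R)) = a i j k • m j := by
      intro j; simp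
    simp_rw [this]
    exact h2 i k
  obtain ⟨s, hs, hsw⟩ := hR J N' (fun _ => ⟨LinearEquiv.refl R R⟩) w hwker
  -- map back to the product of the `N i`
  let h : (∀ jk : J, (N' jk : Type)) →ₗ[R] (∀ i, N i) :=
    LinearMap.pi fun i => ∑ k : Fin (p i),
      (LinearMap.toSpanSingleton R (N i) (z i k)).comp (LinearMap.proj (⟨i, k⟩ : J))
  have hc : ∀ j, h (c j) = q j := by
    intro j
    funext i
    have : h (c j) i = ∑ k, a i j k • z i k := by
      simp only [h, LinearMap.pi_apply, LinearMap.sum_apply, LinearMap.coe_comp,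
        Function.comp_apply, LinearMap.proj_apply, LinearMap.toSpanSingleton_apply]
      rfl
    rw [this, ← h1 i j]
  have hx2 : LinearMap.lTensor M h w = ∑ j, m j ⊗ₜ[R] q j := by
    rw [hw, map_sum]
    simp_rw [lTensor_tmul, hc]
  refine ⟨s, hs, ?_⟩
  rw [← hx2, ← LinearMap.map_smul, hsw, map_zero]

end Aux

theorem s_mittagLeffler_flat_iff_projective_iff_R {R : Type} [CommRing R] (S : Submonoid R)
    {M : Type} [AddCommGroup M] [Module R M] :
    (IsSMittagLeffler R S M (fun N => Module.Flat R (N : Type)) ↔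
      IsSMittagLeffler R S M (fun N => Module.Projective R (N : Type))) ∧
    (IsSMittagLeffler R S M (fun N => Module.Projective R (N : Type)) ↔
      IsSMittagLeffler R S M (fun N => Nonempty ((N : Type) ≃ₗ[R] R))) := by
  have hpf : ∀ N : ModuleCat R, Module.Projective R (N : Type) → Module.Flat R (N : Type) :=
    fun N hN => by haveI := hN; infer_instance
  have hrp : ∀ N : ModuleCat R, Nonempty ((N : Type) ≃ₗ[R] R) → Module.Projective R (N : Type) :=
    fun N ⟨e⟩ => Module.Projective.of_equiv e.symm
  have f2p : IsSMittagLeffler R S M (fun N => Module.Flat R (N : Type)) →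
      IsSMittagLeffler R S M (fun N => Module.Projective R (N : Type)) :=
    isSMittagLeffler_mono S hpf
  have p2r : IsSMittagLeffler R S M (fun N => Module.Projective R (N : Type)) →
      IsSMittagLeffler R S M (fun N => Nonempty ((N : Type) ≃ₗ[R] R)) :=
    isSMittagLeffler_mono S hrp
  have r2f := isSMittagLeffler_flat_of_R S (M := M)
  exact ⟨⟨f2p, fun h => r2f (p2r h)⟩, ⟨p2r, fun h => f2p (r2f h)⟩⟩
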